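/- arXiv:1304.7501 — 2 statements merged into one kernel-verified Lean document; each statement's English description precedes it below -/
import Mathlib

section
/- Let φ : ℂ → ℝ be subharmonic (radial, twice continuously differentiable), and let τ : ℂ → (0,∞) satisfy |τ(z) − τ(ζ)| ≤ c₁|z − ζ| for all z, ζ ∈ ℂ and τ(z)² Δφ(z) ≤ c₂ for all |z| ≥ 1, where c₁, c₂ > 0. Set m_τ = min(1, c₁^{−1})/4. Then for every β ∈ ℝ and 0 < p < ∞ there exists a constant M ≥ 1 such that for all 0 < δ ≤ m_τ, all a ∈ ℂ, and every entire function f: |f(a)|^p e^{−βφ(a)} ≤ (M/(δ²τ(a)²)) ∫_{D(a,δτ(a))} |f(z)|^p e^{−βφ(z)} dm(z). -/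
open MeasureTheory Filter Metric
open scoped ENNReal

noncomputable section

/-- The Laplacian of a radial function `z ↦ φ (|z|)`, expressed in the radius `r`. -/
def lapR (φ : ℝ → ℝ) (r : ℝ) : ℝ := deriv (deriv φ) r + deriv φ r / r

/-- The quantity `∫_ℂ |f(z)|^p e^{-p φ(|z|)} dm(z)`, as a lower Lebesgue integral. -/
def fockLInt (φ : ℝ → ℝ) (p : ℝ) (f : ℂ → ℂ) : ℝ≥0∞ :=
  ∫⁻ z : ℂ, ENNReal.ofReal (‖f z‖ ^ p * Real.exp (-(p * φ (‖z‖))))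

/-- Membership in the weighted Fock space `F^φ_p`: `f` is entire and has finite `F^φ_p` norm. -/
def MemFock (φ : ℝ → ℝ) (p : ℝ) (f : ℂ → ℂ) : Prop :=
  Differentiable ℂ f ∧ fockLInt φ p f < ⊤

/-- The class `𝓘` of rapidly increasing radial weights `φ`, with associated function `τ`. -/
structure ClassI (φ τ : ℝ → ℝ) : Prop where
  φ_pos : ∀ r, 0 ≤ r → 0 < φ r
  φ_smooth : ContDiff ℝ 2 φ
  lap_pos : ∀ r, 0 < r → 0 < lapR φ r
  τ_pos : ∀ r, 0 ≤ r → 0 < τ r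
  τ_diff : Differentiable ℝ τ
  τ_anti : ∀ r s, 0 ≤ r → r ≤ s → τ s ≤ τ r
  τ_lim : Tendsto τ atTop (nhds 0)
  τ_deriv_lim : Tendsto (deriv τ) atTop (nhds 0)
  τ_one : ∃ c, 0 < c ∧ ∀ r, 0 ≤ r → r < 1 → c⁻¹ ≤ τ r ∧ τ r ≤ c
  τ_lap : ∃ c, 0 < c ∧ ∀ r, 1 ≤ r → c⁻¹ ≤ τ r ^ 2 * lapR φ r ∧ τ r ^ 2 * lapR φ r ≤ c
  extra : (∃ C, 0 < C ∧ ∃ R : ℝ, ∀ r s, R ≤ r → r ≤ s → τ r * r ^ C ≤ τ s * s ^ C) ∨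
      Tendsto (fun r => deriv τ r * Real.log (1 / τ r)) atTop (nhds 0)

/-- The integral operator `T_g f (z) = ∫_0^z f(ζ) g'(ζ) dζ` (integral along the segment). -/
def Tg (g f : ℂ → ℂ) (z : ℂ) : ℂ := z * ∫ t in (0:ℝ)..1, f (t • z) * deriv g (t • z)

/-- The integral mean `M_q(r,f)` (with `M_∞(r,f) = max_{|z|=r} |f(z)|`). -/
def circMean (q : ℝ≥0∞) (f : ℂ → ℂ) (r : ℝ) : ℝ :=
  if q = ⊤ then ⨆ t : ℝ, ‖f ((r : ℂ) * Complex.exp ((t : ℂ) * Complex.I))‖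
  else ((2 * Real.pi)⁻¹ * ∫ t in (-Real.pi)..Real.pi,
      ‖f ((r : ℂ) * Complex.exp ((t : ℂ) * Complex.I))‖ ^ q.toReal) ^ (1 / q.toReal)

/-- The `p`-distortion function `ψ_{p,φ}(r) = (∫_r^∞ s e^{-pφ(s)} ds) / ((1+r) e^{-pφ(r)})`. -/
def distortion (φ : ℝ → ℝ) (p r : ℝ) : ℝ :=
  (∫ s in Set.Ioi r, s * Real.exp (-(p * φ s))) / ((1 + r) * Real.exp (-(p * φ r)))

section AuxLemmas
open scoped Real

lemma circle_lb {f : ℂ → ℂ} {a : ℂ} {r : ℝ} (hr : 0 < r)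
    (hd : DiffContOnCl ℂ f (ball a r)) :
    2 * Real.pi * ‖f a‖ ≤ ∫ θ in (0:ℝ)..(2*Real.pi), ‖f (circleMap a r θ)‖ := by
  have h := hd.circleIntegral_sub_inv_smul (mem_ball_self hr)
  have h2 : ‖(2 * Real.pi * Complex.I : ℂ) • f a‖ = 2 * Real.pi * ‖f a‖ := by
    simp [abs_of_pos Real.pi_pos, mul_comm]
  rw [← h] at h2
  rw [← h2]
  unfold circleIntegral
  calc ‖∫ θ in (0:ℝ)..2*π, deriv (circleMap a r) θ • (circleMap a r θ - a)⁻¹ • f (circleMap a r θ)‖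
      ≤ ∫ θ in (0:ℝ)..2*π, ‖deriv (circleMap a r) θ • (circleMap a r θ - a)⁻¹ • f (circleMap a r θ)‖ := by
        
        exact intervalIntegral.norm_integral_le_integral_norm (by positivity)
    _ = ∫ θ in (0:ℝ)..2*π, ‖f (circleMap a r θ)‖ := by
        apply intervalIntegral.integral_congr
        intro θ _
        show ‖deriv (circleMap a r) θ • (circleMap a r θ - a)⁻¹ • f (circleMap a r θ)‖ = _
        rw [deriv_circleMap]
        simp only [norm_smul, norm_mul, Complex.norm_I, mul_one,
          circleMap_sub_center, norm_inv, norm_circleMap_zero, abs_of_pos hr]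
        field_simp

lemma area_lb {f : ℂ → ℂ} {a : ℂ} {R : ℝ} (hR : 0 < R) {s : Set ℂ} (hs : IsOpen s)
    (hsub : closedBall a R ⊆ s) (hd : DifferentiableOn ℂ f s) :
    Real.pi * R ^ 2 * ‖f a‖ ≤ ∫ z in ball a R, ‖f z‖ := by
  have hfc : ∀ z ∈ closedBall a R, ContinuousAt f z := fun z hz =>
    (hd.differentiableAt (hs.mem_nhds (hsub hz))).continuousAt
  -- step 2: translate
  set G : ℂ → ℝ := fun w => ‖f (a + w)‖ with hG
  have step2 : ∫ z in ball a R, ‖f z‖ = ∫ w in ball (0:ℂ) R, G w := by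
    rw [← integral_indicator measurableSet_ball, ← integral_indicator measurableSet_ball,
      ← integral_add_left_eq_self (fun w => (ball a R).indicator (fun z => ‖f z‖) w) a]
    congr 1
    funext w
    have hmem : a + w ∈ ball a R ↔ w ∈ ball (0:ℂ) R := by
      simp [mem_ball, dist_eq_norm]
    by_cases hw : w ∈ ball (0:ℂ) R
    · rw [Set.indicator_of_mem (hmem.mpr hw), Set.indicator_of_mem hw]
    · rw [Set.indicator_of_notMem (fun h => hw (hmem.mp h)), Set.indicator_of_notMem hw]
  -- step 3: polar coordinates
  set H : ℂ → ℝ := fun w => (ball (0:ℂ) R).indicator G w with hH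
  have step3 : ∫ w in ball (0:ℂ) R, G w = ∫ p in polarCoord.target, p.1 • H (Complex.polarCoord.symm p) := by
    rw [Complex.integral_comp_polarCoord_symm H, integral_indicator measurableSet_ball]
  -- step 4: reduce to product set
  set T : Set (ℝ × ℝ) := Set.Ioo (0:ℝ) R ×ˢ Set.Ioo (-π) π with hT
  set F : ℝ × ℝ → ℝ := fun p => p.1 * ‖f (a + Complex.polarCoord.symm p)‖ with hF
  have hTmeas : MeasurableSet T := measurableSet_Ioo.prod measurableSet_Ioo
  have step4 : ∫ p in polarCoord.target, p.1 • H (Complex.polarCoord.symm p) = ∫ p in T, F p := by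
    rw [← integral_indicator (polarCoord.open_target.measurableSet), ← integral_indicator hTmeas]
    congr 1
    funext p
    by_cases hp : p ∈ T
    · have hptarget : p ∈ polarCoord.target := by
        rw [polarCoord_target]
        exact ⟨Set.mem_Ioi.mpr hp.1.1, hp.2⟩
      have habs : ‖Complex.polarCoord.symm p‖ = p.1 := by
        rw [Complex.norm_polarCoord_symm, abs_of_pos hp.1.1]
      have hmem : Complex.polarCoord.symm p ∈ ball (0:ℂ) R := by
        rw [mem_ball, dist_eq_norm, sub_zero, habs]
        exact hp.1.2
      rw [Set.indicator_of_mem hptarget, Set.indicator_of_mem hp]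
      show p.1 • (ball (0:ℂ) R).indicator G (Complex.polarCoord.symm p) = F p
      rw [Set.indicator_of_mem hmem]
      rfl
    · rw [Set.indicator_of_notMem hp]
      by_cases hpt : p ∈ polarCoord.target
      · rw [Set.indicator_of_mem hpt]
        have hp1 : 0 < p.1 := by
          rw [polarCoord_target] at hpt; exact hpt.1
        have hp2 : p.2 ∈ Set.Ioo (-π) π := by
          rw [polarCoord_target] at hpt; exact hpt.2
        have hge : R ≤ p.1 := by
          by_contra hlt
          exact hp ⟨⟨hp1, lt_of_not_ge hlt⟩, hp2⟩
        have : Complex.polarCoord.symm p ∉ ball (0:ℂ) R := by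
          rw [mem_ball, dist_eq_norm, sub_zero,
            Complex.norm_polarCoord_symm, abs_of_pos hp1]
          exact not_lt.mpr hge
        show p.1 • (ball (0:ℂ) R).indicator G (Complex.polarCoord.symm p) = 0
        rw [Set.indicator_of_notMem this, smul_zero]
      · rw [Set.indicator_of_notMem hpt]
  -- step 5: integrability of F on T
  have hFcont : ∀ p ∈ Set.Icc (0:ℝ) R ×ˢ Set.Icc (-π) π, ContinuousAt F p := by
    intro p hp
    have h1 : ContinuousAt (fun q : ℝ × ℝ => a + Complex.polarCoord.symm q) p := by
      have he : (fun q : ℝ × ℝ => a + (Complex.polarCoord.symm q : ℂ)) =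
          fun q : ℝ × ℝ => a + (q.1 : ℂ) * (Real.cos q.2 + Real.sin q.2 * Complex.I) := by
        funext q; rw [Complex.polarCoord_symm_apply]
      rw [he]
      fun_prop
    have hmem : a + Complex.polarCoord.symm p ∈ closedBall a R := by
      rw [mem_closedBall, dist_eq_norm, add_sub_cancel_left,
        Complex.norm_polarCoord_symm, abs_of_nonneg hp.1.1]
      exact hp.1.2
    exact continuousAt_fst.mul (continuous_norm.continuousAt.comp
      (ContinuousAt.comp (hfc _ hmem) h1))
  have hKcomp : IsCompact (Set.Icc (0:ℝ) R ×ˢ Set.Icc (-π) π) := isCompact_Icc.prod isCompact_Icc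
  have hFint : IntegrableOn F T := by
    have h1 : IntegrableOn F (Set.Icc (0:ℝ) R ×ˢ Set.Icc (-π) π) :=
      (continuousOn_of_forall_continuousAt hFcont).integrableOn_compact hKcomp
    exact h1.mono_set (Set.prod_mono Set.Ioo_subset_Icc_self Set.Ioo_subset_Icc_self)
  -- step 6: Fubini
  have step6 : ∫ p in T, F p = ∫ r in Set.Ioo (0:ℝ) R, ∫ θ in Set.Ioo (-π) π, F (r, θ) := by
    rw [hT] at hFint ⊢
    rw [show (volume : Measure (ℝ × ℝ)) = (volume : Measure ℝ).prod volume from (rfl : (volume : Measure (ℝ×ℝ)) = (volume : Measure ℝ).prod volume)] at hFint ⊢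
    exact setIntegral_prod F hFint
  have hinner_int : IntegrableOn (fun r => ∫ θ in Set.Ioo (-π) π, F (r, θ)) (Set.Ioo (0:ℝ) R) := by
    have h1 := hFint
    rw [hT, IntegrableOn, show (volume : Measure (ℝ × ℝ)) = (volume : Measure ℝ).prod volume from rfl,
      ← Measure.prod_restrict] at h1
    exact h1.integral_prod_left
  -- step 7: pointwise lower bound for the inner integral
  have step7 : ∀ r ∈ Set.Ioo (0:ℝ) R, 2 * π * ‖f a‖ * r ≤ ∫ θ in Set.Ioo (-π) π, F (r, θ) := by
    intro r hr
    have hdc : DiffContOnCl ℂ f (ball a r) := by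
      apply DifferentiableOn.diffContOnCl
      apply hd.mono
      refine subset_trans ?_ hsub
      rw [closure_ball a hr.1.ne']
      exact closedBall_subset_closedBall hr.2.le
    have hcirc := circle_lb hr.1 hdc
    have key : ∀ θ : ℝ, F (r, θ) = r * ‖f (circleMap a r θ)‖ := by
      intro θ
      have h2 : a + Complex.polarCoord.symm (r, θ) = circleMap a r θ := by
        rw [Complex.polarCoord_symm_apply, circleMap]
        simp only
        rw [Complex.exp_mul_I]
        push_cast
        ring
      rw [hF]
      simp only
      rw [h2]
    have hper : Function.Periodic (fun θ => ‖f (circleMap a r θ)‖) (2*π) := by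
      intro θ
      simp only
      rw [periodic_circleMap a r θ]
    have hshift := hper.intervalIntegral_add_eq (-π) 0
    rw [show -π + 2*π = π by ring, zero_add] at hshift
    calc 2*π*‖f a‖ * r = r * (2*π*‖f a‖) := by ring
      _ ≤ r * ∫ θ in (0:ℝ)..2*π, ‖f (circleMap a r θ)‖ :=
          mul_le_mul_of_nonneg_left hcirc hr.1.le
      _ = r * ∫ θ in Set.Ioo (-π) π, ‖f (circleMap a r θ)‖ := by
          rw [← hshift, intervalIntegral.integral_of_le (by linarith [Real.pi_pos]),
            integral_Ioc_eq_integral_Ioo]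
      _ = ∫ θ in Set.Ioo (-π) π, F (r, θ) := by
          rw [← integral_const_mul]
          congr 1
          funext θ
          rw [key θ]
  -- step 8: integrate the lower bound
  have hlow : IntegrableOn (fun r => 2*π*‖f a‖ * r) (Set.Ioo (0:ℝ) R) := by
    have h1 : IntegrableOn (fun r => 2*π*‖f a‖ * r) (Set.Icc (0:ℝ) R) :=
      (Continuous.continuousOn (by fun_prop)).integrableOn_compact isCompact_Icc
    exact h1.mono_set Set.Ioo_subset_Icc_self
  have step8 := setIntegral_mono_on hlow hinner_int measurableSet_Ioo step7
  have hid : ∫ r in Set.Ioo (0:ℝ) R, 2*π*‖f a‖ * r = π * R^2 * ‖f a‖ := by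
    rw [integral_const_mul, ← integral_Ioc_eq_integral_Ioo,
      ← intervalIntegral.integral_of_le hR.le, integral_id]
    ring
  rw [step2, step3, step4, step6]
  rw [hid] at step8
  exact step8

lemma le_rpow_mul_rpow {x M p : ℝ} (hx : 0 ≤ x) (hxM : x ≤ M) (hp : 0 ≤ p) (hp1 : p ≤ 1) :
    x ≤ M ^ (1 - p) * x ^ p := by
  rcases eq_or_lt_of_le hx with h0 | h0
  · have : (0:ℝ) ≤ M ^ (1-p) * x ^ p :=
      mul_nonneg (Real.rpow_nonneg (hx.trans hxM) _) (Real.rpow_nonneg hx _)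
    linarith [h0]
  · have hxx : x = x ^ (1 - p) * x ^ p := by
      rw [← Real.rpow_add h0, sub_add_cancel, Real.rpow_one]
    nth_rewrite 1 [hxx]
    exact mul_le_mul_of_nonneg_right
      (Real.rpow_le_rpow hx hxM (by linarith : (0:ℝ) ≤ 1 - p)) (Real.rpow_nonneg hx p)

lemma submean_aux {p : ℝ} (hp : 0 < p) (hp1 : p ≤ 1) :
    ∃ C : ℝ, 1 ≤ C ∧ ∀ (a : ℂ) (R : ℝ), 0 < R → ∀ (f : ℂ → ℂ) (s : Set ℂ), IsOpen s →
      closedBall a R ⊆ s → DifferentiableOn ℂ f s →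
      ‖f a‖ ^ p ≤ C / R ^ 2 * ∫ z in ball a R, ‖f z‖ ^ p := by
  refine ⟨max 1 (8 * (2 ^ (2/p) / Real.pi)), le_max_left _ _, ?_⟩
  set K₁ : ℝ := 2 ^ (2/p) / Real.pi with hK₁
  have hK₁pos : 0 < K₁ := div_pos (Real.rpow_pos_of_pos two_pos _) Real.pi_pos
  intro a R hR f s hs hsub hd
  set I : ℝ := ∫ z in ball a R, ‖f z‖ ^ p with hI
  have hfc : ∀ z ∈ closedBall a R, ContinuousAt f z := fun z hz =>
    (hd.differentiableAt (hs.mem_nhds (hsub hz))).continuousAt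
  have habs_cont : ContinuousOn (fun z => ‖f z‖) (closedBall a R) :=
    fun z hz => (continuous_norm.continuousAt.comp (hfc z hz)).continuousWithinAt
  have habsp_cont : ContinuousOn (fun z => ‖f z‖ ^ p) (closedBall a R) :=
    habs_cont.rpow_const (fun z hz => Or.inr hp.le)
  have hIint : IntegrableOn (fun z => ‖f z‖ ^ p) (ball a R) :=
    (habsp_cont.integrableOn_compact (isCompact_closedBall a R)).mono_set ball_subset_closedBall
  have hInonneg : 0 ≤ I :=
    setIntegral_nonneg measurableSet_ball (fun z _ => Real.rpow_nonneg (norm_nonneg _) _)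
  have hIdef : I = ∫ z in ball a R, ‖f z‖ ^ p := hI
  clear_value I
  -- the sup function
  set h : ℝ → ℝ := fun t => sSup ((fun z => ‖f z‖) '' closedBall a t) with hh
  have hne : ∀ t : ℝ, 0 ≤ t → ((fun z => ‖f z‖) '' closedBall a t).Nonempty :=
    fun t ht => ⟨_, Set.mem_image_of_mem _ (mem_closedBall_self ht)⟩
  have hbdd : ∀ t : ℝ, t ≤ R → BddAbove ((fun z => ‖f z‖) '' closedBall a t) := by
    intro t ht
    exact ((isCompact_closedBall a t).image_of_continuousOn
      (habs_cont.mono (closedBall_subset_closedBall ht))).bddAbove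
  have hle_h : ∀ t : ℝ, t ≤ R → ∀ z ∈ closedBall a t, ‖f z‖ ≤ h t :=
    fun t ht z hz => le_csSup (hbdd t ht) (Set.mem_image_of_mem _ hz)
  have hh_nonneg : ∀ t : ℝ, 0 ≤ t → t ≤ R → 0 ≤ h t :=
    fun t ht htR => le_trans (norm_nonneg _) (hle_h t htR a (mem_closedBall_self ht))
  -- key bound
  have key : ∀ t s₀ : ℝ, 0 ≤ t → t < s₀ → s₀ ≤ R →
      Real.pi * (s₀ - t) ^ 2 * h t ≤ h s₀ ^ (1 - p) * I := by
    intro t s₀ ht hts hs₀R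
    obtain ⟨z₀, hz₀mem, hz₀max⟩ := (isCompact_closedBall a t).exists_isMaxOn
      ⟨a, mem_closedBall_self ht⟩
      (habs_cont.mono (closedBall_subset_closedBall (hts.le.trans hs₀R)))
    have hz₀R : z₀ ∈ closedBall a R := closedBall_subset_closedBall (hts.le.trans hs₀R) hz₀mem
    have hht : h t = ‖f z₀‖ := by
      apply IsGreatest.csSup_eq
      refine ⟨Set.mem_image_of_mem _ hz₀mem, ?_⟩
      rintro y ⟨z, hz, rfl⟩
      exact hz₀max hz
    set ρ : ℝ := s₀ - t with hρ
    have hρpos : 0 < ρ := by simp only [hρ]; linarith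
    have hball : closedBall z₀ ρ ⊆ closedBall a s₀ := by
      intro w hw
      rw [mem_closedBall] at hw ⊢
      calc dist w a ≤ dist w z₀ + dist z₀ a := dist_triangle _ _ _
        _ ≤ ρ + t := add_le_add hw (mem_closedBall.mp hz₀mem)
        _ = s₀ := by simp only [hρ]; ring
    have hballR : closedBall z₀ ρ ⊆ closedBall a R :=
      hball.trans (closedBall_subset_closedBall hs₀R)
    have hballR' : ball z₀ ρ ⊆ ball a R := by
      intro w hw
      rw [mem_ball] at hw ⊢
      calc dist w a ≤ dist w z₀ + dist z₀ a := dist_triangle _ _ _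
        _ < ρ + t := by
            have := mem_closedBall.mp hz₀mem
            linarith
        _ = s₀ := by simp only [hρ]; ring
        _ ≤ R := hs₀R
    have harea := area_lb hρpos hs (hballR.trans hsub) hd
    have hpt : ∀ w ∈ ball z₀ ρ, ‖f w‖ ≤ h s₀ ^ (1-p) * ‖f w‖ ^ p :=
      fun w hw => le_rpow_mul_rpow (norm_nonneg _)
        (hle_h s₀ hs₀R w (hball (ball_subset_closedBall hw))) hp.le hp1
    have h1 : ∫ z in ball z₀ ρ, ‖f z‖
        ≤ ∫ z in ball z₀ ρ, h s₀ ^ (1-p) * ‖f z‖ ^ p := by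
      apply setIntegral_mono_on
      · exact ((habs_cont.mono hballR).integrableOn_compact
          (isCompact_closedBall _ _)).mono_set ball_subset_closedBall
      · exact Integrable.const_mul (((habsp_cont.mono hballR).integrableOn_compact
          (isCompact_closedBall _ _)).mono_set ball_subset_closedBall) _
      · exact measurableSet_ball
      · exact hpt
    have h2 : ∫ z in ball z₀ ρ, h s₀ ^ (1-p) * ‖f z‖ ^ p
        = h s₀ ^ (1-p) * ∫ z in ball z₀ ρ, ‖f z‖ ^ p := integral_const_mul _ _
    have h3 : ∫ z in ball z₀ ρ, ‖f z‖ ^ p ≤ I := by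
      rw [hIdef]
      apply setIntegral_mono_set hIint
      · exact Eventually.of_forall (fun z => Real.rpow_nonneg (norm_nonneg _) _)
      · exact HasSubset.Subset.eventuallyLE hballR'
    have hhs₀nn : 0 ≤ h s₀ ^ (1 - p) :=
      Real.rpow_nonneg (hh_nonneg s₀ (ht.trans hts.le) hs₀R) _
    calc Real.pi * ρ ^ 2 * h t = Real.pi * ρ ^ 2 * ‖f z₀‖ := by rw [hht]
      _ ≤ ∫ z in ball z₀ ρ, ‖f z‖ := harea
      _ ≤ h s₀ ^ (1-p) * ∫ z in ball z₀ ρ, ‖f z‖ ^ p := h1.trans (le_of_eq h2)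
      _ ≤ h s₀ ^ (1-p) * I := mul_le_mul_of_nonneg_left h3 hhs₀nn
  -- the sup quantity Q
  set Q : ℝ := sSup ((fun t => (R - t) ^ (2/p) * h t) '' Set.Icc (R/2) R) with hQdef
  have hQbdd : BddAbove ((fun t => (R - t) ^ (2/p) * h t) '' Set.Icc (R/2) R) := by
    refine ⟨R ^ (2/p) * h R, ?_⟩
    rintro y ⟨t, ht, rfl⟩
    have h1 : (R - t) ^ (2/p) ≤ R ^ (2/p) :=
      Real.rpow_le_rpow (by linarith [ht.1, ht.2, hR]) (by linarith [ht.1, ht.2, hR])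
        (by positivity)
    have h2 : h t ≤ h R := by
      apply csSup_le_csSup (hbdd R le_rfl) (hne t (by linarith [ht.1, hR]))
      exact Set.image_mono (closedBall_subset_closedBall ht.2)
    exact mul_le_mul h1 h2 (hh_nonneg t (by linarith [ht.1, hR]) ht.2)
      (Real.rpow_nonneg hR.le _)
  have hQne : ((fun t => (R - t) ^ (2/p) * h t) '' Set.Icc (R/2) R).Nonempty :=
    ⟨(fun t => (R - t) ^ (2/p) * h t) (R/2), Set.mem_image_of_mem _
      (show R/2 ∈ Set.Icc (R/2) R from ⟨le_rfl, by linarith⟩)⟩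
  have hQnonneg : 0 ≤ Q := by
    have hmem : (R - R) ^ (2/p) * h R ∈ (fun t => (R - t) ^ (2/p) * h t) '' Set.Icc (R/2) R :=
      Set.mem_image_of_mem _ (Set.mem_Icc.mpr ⟨by linarith, le_rfl⟩)
    have : (R - R) ^ (2/p) * h R = 0 := by
      rw [sub_self, Real.zero_rpow (by positivity)]
      ring
    linarith [le_csSup hQbdd hmem]
  have hhalf : ‖f a‖ ≤ h (R/2) :=
    hle_h (R/2) (by linarith) a (mem_closedBall_self (by linarith))
  have hhQ : (R/2) ^ (2/p) * h (R/2) ≤ Q := by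
    have hm := le_csSup hQbdd (Set.mem_image_of_mem (fun t => (R - t) ^ (2/p) * h t)
      (show R/2 ∈ Set.Icc (R/2) R from ⟨le_rfl, by linarith⟩))
    simpa only [show R - R/2 = R/2 by ring] using hm
  have hRhalfpos : (0:ℝ) < R/2 := by linarith
  by_cases hQ0 : Q ≤ 0
  · -- degenerate case : f a = 0
    have hh2 : h (R/2) ≤ 0 := by
      have hpow : 0 < (R/2) ^ (2/p) := Real.rpow_pos_of_pos hRhalfpos _
      nlinarith [hh_nonneg (R/2) hRhalfpos.le (by linarith)]
    have hfa : ‖f a‖ = 0 := le_antisymm (hhalf.trans hh2) (norm_nonneg _)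
    rw [hfa, Real.zero_rpow hp.ne']
    have : (0:ℝ) ≤ max 1 (8 * K₁) / R ^ 2 * I := by positivity
    simpa using this
  · push_neg at hQ0
    obtain ⟨y, ⟨t, htmem, rfl⟩, hy'⟩ := exists_lt_of_lt_csSup hQne (half_lt_self hQ0)
    have hy : Q / 2 < (R - t) ^ (2/p) * h t := hy'
    have hdpos : 0 < R - t := by
      rcases lt_or_eq_of_le htmem.2 with h' | h'
      · linarith
      · exfalso
        rw [h', sub_self, Real.zero_rpow (by positivity), zero_mul] at hy
        linarith
    set d : ℝ := R - t with hd'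
    set e : ℝ := d / 2 with he'
    have hepos : 0 < e := by simp only [he']; linarith
    set s₀ : ℝ := (t + R) / 2 with hs₀'
    have hts₀ : t < s₀ := by simp only [hs₀']; linarith
    have hs₀R : s₀ ≤ R := by simp only [hs₀']; linarith
    have hs₀mem : s₀ ∈ Set.Icc (R/2) R := ⟨by linarith [htmem.1], hs₀R⟩
    have hs₀t : s₀ - t = e := by simp only [hs₀', he', hd']; ring
    have hRs₀ : R - s₀ = e := by simp only [hs₀', he', hd']; ring
    have ht0 : 0 ≤ t := by linarith [htmem.1]
    have hkey := key t s₀ ht0 hts₀ hs₀R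
    rw [hs₀t] at hkey
    have hhs₀Q : h s₀ ≤ Q / e ^ (2/p) := by
      rw [le_div_iff₀ (Real.rpow_pos_of_pos hepos _)]
      have h9 : (R - s₀) ^ (2/p) * h s₀ ≤ Q := le_csSup hQbdd (Set.mem_image_of_mem
        (fun t => (R - t) ^ (2/p) * h t) hs₀mem)
      rw [hRs₀] at h9
      linarith [h9]
    have hhs₀nn : 0 ≤ h s₀ := hh_nonneg s₀ (ht0.trans hts₀.le) hs₀R
    -- combine
    have hmain : Q / 2 < Q ^ (1-p) * I * (2 ^ (2/p) / Real.pi) := by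
      have h5 : h t ≤ (h s₀ ^ (1-p) * I) / (Real.pi * e ^ 2) := by
        rw [le_div_iff₀ (by positivity)]
        calc h t * (Real.pi * e ^ 2) = Real.pi * e ^ 2 * h t := by ring
          _ ≤ h s₀ ^ (1-p) * I := hkey
      have h6 : h s₀ ^ (1-p) ≤ (Q / e ^ (2/p)) ^ (1-p) :=
        Real.rpow_le_rpow hhs₀nn hhs₀Q (by linarith)
      have h7 : d ^ (2/p) * h t ≤ d ^ (2/p) * ((Q / e ^ (2/p)) ^ (1-p) * I / (Real.pi * e ^ 2)) := by
        apply mul_le_mul_of_nonneg_left _ (Real.rpow_nonneg hdpos.le _)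
        calc h t ≤ (h s₀ ^ (1-p) * I) / (Real.pi * e ^ 2) := h5
          _ ≤ (Q / e ^ (2/p)) ^ (1-p) * I / (Real.pi * e ^ 2) := by
              apply div_le_div_of_nonneg_right _ (by positivity)
              exact mul_le_mul_of_nonneg_right h6 hInonneg
      have hA : d ^ ((2:ℝ)/p) = 2 ^ ((2:ℝ)/p) * e ^ ((2:ℝ)/p) := by
        rw [show d = 2*e by simp only [he']; ring, Real.mul_rpow (by norm_num) hepos.le]
      have hB : (e ^ ((2:ℝ)/p)) ^ (1-p) * (e:ℝ) ^ (2:ℕ) = e ^ ((2:ℝ)/p) := by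
        rw [← Real.rpow_natCast e 2, ← Real.rpow_mul hepos.le, ← Real.rpow_add hepos]
        congr 1
        push_cast
        field_simp
        ring
      have h8 : d ^ (2/p) * ((Q / e ^ (2/p)) ^ (1-p) * I / (Real.pi * e ^ 2))
          = Q ^ (1-p) * I * (2 ^ (2/p) / Real.pi) := by
        calc d ^ (2/p) * ((Q / e ^ (2/p)) ^ (1-p) * I / (Real.pi * e ^ 2))
            = (2 ^ ((2:ℝ)/p) * e ^ ((2:ℝ)/p)) *
                ((Q ^ (1-p) / (e ^ ((2:ℝ)/p)) ^ (1-p)) * I / (Real.pi * e ^ 2)) := by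
              rw [hA, Real.div_rpow hQnonneg (Real.rpow_nonneg hepos.le _)]
          _ = Q ^ (1-p) * I * (2 ^ ((2:ℝ)/p) / Real.pi) *
                (e ^ ((2:ℝ)/p) / ((e ^ ((2:ℝ)/p)) ^ (1-p) * e ^ 2)) := by
              have hn1 : ((e:ℝ) ^ ((2:ℝ)/p)) ^ (1-p) ≠ 0 :=
                ne_of_gt (Real.rpow_pos_of_pos (Real.rpow_pos_of_pos hepos _) _)
              have hn3 : (e:ℝ) ≠ 0 := ne_of_gt hepos
              field_simp
          _ = Q ^ (1-p) * I * (2 ^ (2/p) / Real.pi) := by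
              rw [hB, div_self (ne_of_gt (Real.rpow_pos_of_pos hepos _)), mul_one]
      calc Q / 2 < d ^ (2/p) * h t := hy
        _ ≤ _ := h7.trans (le_of_eq h8)
    -- absorb
    have hQp : Q ^ p ≤ 2 * K₁ * I := by
      have hsplit : Q = Q ^ p * Q ^ (1-p) := by
        rw [← Real.rpow_add hQ0, add_sub_cancel, Real.rpow_one]
      have hQ1p : 0 < Q ^ (1-p) := Real.rpow_pos_of_pos hQ0 _
      have : Q ^ p * Q ^ (1-p) < 2 * (Q ^ (1-p) * I * K₁) := by
        rw [← hsplit]; rw [hK₁]; linarith [hmain]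
      have h2' : Q ^ p * Q ^ (1-p) < (2 * K₁ * I) * Q ^ (1-p) := by
        calc Q ^ p * Q ^ (1-p) < 2 * (Q ^ (1-p) * I * K₁) := this
          _ = (2 * K₁ * I) * Q ^ (1-p) := by ring
      exact le_of_lt (lt_of_mul_lt_mul_right h2' hQ1p.le)
    -- conclude
    have hfinal : ‖f a‖ ^ p ≤ Q ^ p / (R/2) ^ 2 := by
      have hh2 : ‖f a‖ ^ p ≤ h (R/2) ^ p :=
        Real.rpow_le_rpow (norm_nonneg _) hhalf hp.le
      have hh3 : h (R/2) ≤ Q / (R/2) ^ (2/p) := by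
        rw [le_div_iff₀ (Real.rpow_pos_of_pos hRhalfpos _)]
        linarith [hhQ]
      have hh4 : h (R/2) ^ p ≤ (Q / (R/2) ^ (2/p)) ^ p :=
        Real.rpow_le_rpow (hh_nonneg (R/2) hRhalfpos.le (by linarith)) hh3 hp.le
      have hh5 : (Q / (R/2) ^ (2/p)) ^ p = Q ^ p / (R/2) ^ 2 := by
        rw [Real.div_rpow hQnonneg (Real.rpow_nonneg hRhalfpos.le _),
          ← Real.rpow_mul hRhalfpos.le]
        rw [show (2:ℝ)/p * p = 2 by field_simp]
        rw [show ((2:ℝ) : ℝ) = ((2:ℕ):ℝ) by norm_num, Real.rpow_natCast]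
      exact hh2.trans (hh4.trans_eq hh5)
    have hconc : Q ^ p / (R/2) ^ 2 ≤ (8 * K₁) / R ^ 2 * I := by
      rw [div_le_iff₀ (by positivity)]
      have hRR : (R/2) ^ 2 = R ^ 2 / 4 := by ring
      calc Q ^ p ≤ 2 * K₁ * I := hQp
        _ = 8 * K₁ / R^2 * I * (R^2/4) := by field_simp; ring
        _ = 8 * K₁ / R ^ 2 * I * (R/2)^2 := by rw [hRR]
    refine hfinal.trans (hconc.trans ?_)
    apply mul_le_mul_of_nonneg_right _ hInonneg
    gcongr
    exact le_max_right _ _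


lemma submean {p : ℝ} (hp : 0 < p) :
    ∃ C : ℝ, 1 ≤ C ∧ ∀ (a : ℂ) (R : ℝ), 0 < R → ∀ (f : ℂ → ℂ) (s : Set ℂ), IsOpen s →
      closedBall a R ⊆ s → DifferentiableOn ℂ f s →
      ‖f a‖ ^ p ≤ C / R ^ 2 * ∫ z in ball a R, ‖f z‖ ^ p := by
  set m : ℕ := max 1 ⌈p⌉₊ with hm
  have hm0 : 0 < (m:ℝ) := by
    have : 1 ≤ m := le_max_left _ _
    exact_mod_cast Nat.lt_of_lt_of_le Nat.zero_lt_one this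
  set q : ℝ := p / m with hq
  have hq0 : 0 < q := div_pos hp hm0
  have hq1 : q ≤ 1 := by
    rw [hq, div_le_one hm0]
    calc p ≤ (⌈p⌉₊ : ℝ) := Nat.le_ceil p
      _ ≤ (m : ℝ) := by exact_mod_cast le_max_right 1 ⌈p⌉₊
  obtain ⟨C, hC1, hC⟩ := submean_aux hq0 hq1
  refine ⟨C, hC1, ?_⟩
  intro a R hR f s hs hsub hd
  have hgd : DifferentiableOn ℂ (fun z => (f z) ^ m) s := hd.pow m
  have hkey : ∀ z : ℂ, ‖(f z) ^ m‖ ^ q = ‖f z‖ ^ p := by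
    intro z
    rw [norm_pow, ← Real.rpow_natCast (‖f z‖) m, ← Real.rpow_mul (norm_nonneg _)]
    congr 1
    rw [hq]
    field_simp
  have := hC a R hR (fun z => (f z) ^ m) s hs hsub hgd
  rw [hkey a] at this
  calc ‖f a‖ ^ p ≤ C / R ^ 2 * ∫ z in ball a R, ‖(f z) ^ m‖ ^ q := this
    _ = C / R ^ 2 * ∫ z in ball a R, ‖f z‖ ^ p := by
        congr 1
        apply setIntegral_congr_fun measurableSet_ball
        intro z _
        exact hkey z

lemma radial_est (φ : ℝ → ℝ) (hφ : ContDiff ℝ 2 φ)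
    (r₀ R Λ : ℝ) (hR : 0 < R) (hr₀R : 1 ≤ r₀ - R) (hΛ : 0 ≤ Λ)
    (hlap : ∀ u ∈ Set.Icc (r₀ - R) (r₀ + R), 0 ≤ lapR φ u ∧ lapR φ u ≤ Λ) :
    ∀ x ∈ Set.Icc (r₀ - R) (r₀ + R),
      |φ x - φ r₀ - r₀ * deriv φ r₀ * (Real.log x - Real.log r₀)|
        ≤ R ^ 2 * (r₀ + R) * Λ / (r₀ - R) := by
  have hφ2 : ContDiff ℝ ((1:ℕ) + 1) φ := by exact_mod_cast hφ
  have hφ' : ContDiff ℝ 1 (deriv φ) := (contDiff_succ_iff_deriv.mp hφ2).2.2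
  have hφdiff : Differentiable ℝ φ := (contDiff_succ_iff_deriv.mp hφ2).1
  have hcont' : Continuous (deriv φ) := hφ'.continuous
  have hcont'' : Continuous (deriv (deriv φ)) := hφ'.continuous_deriv le_rfl
  have hpos : ∀ u ∈ Set.Icc (r₀ - R) (r₀ + R), (0:ℝ) < u := fun u hu => by
    have := hu.1; linarith
  have hr₀mem : r₀ ∈ Set.Icc (r₀ - R) (r₀ + R) := ⟨by linarith, by linarith⟩
  have hr₀pos : 0 < r₀ := hpos r₀ hr₀mem
  -- derivative of u * φ'(u)
  have hprod : ∀ u : ℝ, u ≠ 0 → HasDerivAt (fun v => v * deriv φ v) (u * lapR φ u) u := by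
    intro u hu
    have h := (hasDerivAt_id u).mul ((hφ'.differentiable one_ne_zero u).hasDerivAt)
    convert h using 1
    case e'_4 => rfl
    case e'_5 => rfl
    case e'_8 => rfl
    unfold lapR
    field_simp
    rw [id]
    ring
  -- continuity of u * lapR u away from 0
  have hlapcont : ∀ (s : Set ℝ), (∀ u ∈ s, u ≠ 0) → ContinuousOn (fun u => u * lapR φ u) s := by
    intro s hs
    unfold lapR
    exact continuousOn_id.mul (hcont''.continuousOn.add
      (hcont'.continuousOn.div continuousOn_id hs))
  -- FTC for J
  have hJ : ∀ x ∈ Set.Icc (r₀ - R) (r₀ + R),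
      x * deriv φ x - r₀ * deriv φ r₀ = ∫ u in r₀..x, u * lapR φ u := by
    intro x hx
    have hsubI : Set.uIcc r₀ x ⊆ Set.Icc (r₀ - R) (r₀ + R) := Set.uIcc_subset_Icc hr₀mem hx
    rw [intervalIntegral.integral_eq_sub_of_hasDerivAt
      (fun u hu => hprod u (ne_of_gt (hpos u (hsubI hu))))
      ((hlapcont _ (fun u hu => ne_of_gt (hpos u (hsubI hu)))).intervalIntegrable)]
  -- bound on J
  have hJbd : ∀ x ∈ Set.Icc (r₀ - R) (r₀ + R),
      |x * deriv φ x - r₀ * deriv φ r₀| ≤ (r₀ + R) * Λ * R := by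
    intro x hx
    rw [hJ x hx, ← Real.norm_eq_abs]
    have hb := intervalIntegral.norm_integral_le_of_norm_le_const (C := (r₀ + R) * Λ)
      (f := fun u => u * lapR φ u) (a := r₀) (b := x) ?_
    · refine hb.trans ?_
      have : |x - r₀| ≤ R := by
        rw [abs_le]; constructor <;> [linarith [hx.1]; linarith [hx.2]]
      exact mul_le_mul_of_nonneg_left this (by positivity)
    · intro u hu
      have humem : u ∈ Set.Icc (r₀ - R) (r₀ + R) :=
        Set.uIcc_subset_Icc hr₀mem hx (Set.uIoc_subset_uIcc hu)
      have hu0 : 0 < u := hpos u humem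
      have hl := hlap u humem
      show ‖u * lapR φ u‖ ≤ (r₀ + R) * Λ
      rw [Real.norm_eq_abs, abs_of_nonneg (mul_nonneg hu0.le hl.1)]
      exact mul_le_mul (by linarith [humem.2]) hl.2 hl.1 (by linarith)
  -- FTC for E
  intro x hx
  have hsubI : Set.uIcc r₀ x ⊆ Set.Icc (r₀ - R) (r₀ + R) := Set.uIcc_subset_Icc hr₀mem hx
  have hE : φ x - φ r₀ - r₀ * deriv φ r₀ * (Real.log x - Real.log r₀)
      = ∫ u in r₀..x, (deriv φ u - r₀ * deriv φ r₀ / u) := by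
    have hftc := intervalIntegral.integral_eq_sub_of_hasDerivAt
      (f := fun u => φ u - r₀ * deriv φ r₀ * Real.log u)
      (f' := fun u => deriv φ u - r₀ * deriv φ r₀ / u) (a := r₀) (b := x) ?_ ?_
    · rw [hftc]; ring
    · intro u hu
      have hu0 : 0 < u := hpos u (hsubI hu)
      have h1 := (hφdiff u).hasDerivAt
      have h2 := (Real.hasDerivAt_log (ne_of_gt hu0)).const_mul (r₀ * deriv φ r₀)
      have h3 := h1.sub h2
      convert h3 using 1
      · rfl
      · rw [div_eq_mul_inv]
    · apply ContinuousOn.intervalIntegrable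
      apply ContinuousOn.sub (hcont'.continuousOn)
      exact continuousOn_const.div continuousOn_id
        (fun u hu => ne_of_gt (hpos u (hsubI hu)))
  rw [hE, ← Real.norm_eq_abs]
  have hb := intervalIntegral.norm_integral_le_of_norm_le_const
    (C := (r₀ + R) * Λ * R / (r₀ - R))
    (f := fun u => deriv φ u - r₀ * deriv φ r₀ / u) (a := r₀) (b := x) ?_
  · refine hb.trans ?_
    have h1 : |x - r₀| ≤ R := by
      rw [abs_le]; constructor <;> [linarith [hx.1]; linarith [hx.2]]
    calc (r₀ + R) * Λ * R / (r₀ - R) * |x - r₀| ≤ (r₀ + R) * Λ * R / (r₀ - R) * R :=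
          mul_le_mul_of_nonneg_left h1 (by positivity)
      _ = R ^ 2 * (r₀ + R) * Λ / (r₀ - R) := by ring
  · intro u hu
    have humem : u ∈ Set.Icc (r₀ - R) (r₀ + R) :=
      hsubI (Set.uIoc_subset_uIcc hu)
    have hu0 : 0 < u := hpos u humem
    have heq : deriv φ u - r₀ * deriv φ r₀ / u = (u * deriv φ u - r₀ * deriv φ r₀) / u := by
      field_simp
    show ‖deriv φ u - r₀ * deriv φ r₀ / u‖ ≤ (r₀ + R) * Λ * R / (r₀ - R)
    rw [Real.norm_eq_abs, heq, abs_div, abs_of_pos hu0]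
    have hnum := hJbd u humem
    have hden : r₀ - R ≤ u := humem.1
    exact div_le_div₀ (by positivity) hnum (by linarith) hden

set_option maxHeartbeats 1000000 in
lemma weight_approx (φ : ℝ → ℝ) (hφ : ContDiff ℝ 2 φ) (hsub : ∀ r : ℝ, 0 < r → 0 ≤ lapR φ r)
    (τ : ℂ → ℝ) (c₁ c₂ : ℝ) (hc₁ : 0 < c₁) (hc₂ : 0 < c₂) (hτpos : ∀ z, 0 < τ z)
    (hlip : ∀ z ζ : ℂ, |τ z - τ ζ| ≤ c₁ * ‖z - ζ‖)
    (hbd : ∀ z : ℂ, 1 ≤ ‖z‖ → τ z ^ 2 * lapR φ (‖z‖) ≤ c₂) :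
    ∃ C₀ : ℝ, 0 ≤ C₀ ∧ ∀ δ : ℝ, 0 < δ → δ ≤ min 1 c₁⁻¹ / 4 → ∀ a : ℂ,
      ∃ (g : ℂ → ℂ) (s : Set ℂ), IsOpen s ∧ closedBall a (δ * τ a) ⊆ s ∧
        DifferentiableOn ℂ g s ∧ (g a).re = φ (‖a‖) ∧
        ∀ z ∈ closedBall a (δ * τ a), |φ (‖z‖) - (g z).re| ≤ C₀ := by
  set τ₀ : ℝ := τ 0 with hτ₀
  have hτ₀pos : 0 < τ₀ := hτpos 0
  -- bound for φ on a fixed compact interval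
  obtain ⟨B, hB⟩ := (isCompact_Icc (a := (0:ℝ)) (b := 3 + 3*τ₀)).exists_bound_of_continuousOn
    (hφ.continuous.continuousOn)
  have hB0 : 0 ≤ B := le_trans (norm_nonneg _) (hB 0 ⟨le_rfl, by linarith⟩)
  refine ⟨max c₂ (2*B), le_trans hc₂.le (le_max_left _ _), ?_⟩
  intro δ hδ hδle a
  have hδ1 : δ ≤ 1/4 := by
    have h1 : min 1 c₁⁻¹ ≤ 1 := min_le_left _ _
    linarith [hδle, h1]
  have hδc₁ : δ * c₁ ≤ 1/4 := by
    have h1 : min 1 c₁⁻¹ ≤ c₁⁻¹ := min_le_right _ _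
    have h2 : δ ≤ c₁⁻¹ / 4 := le_trans hδle (by linarith)
    calc δ * c₁ ≤ c₁⁻¹ / 4 * c₁ := mul_le_mul_of_nonneg_right h2 hc₁.le
      _ = 1/4 := by field_simp
  set r₀ : ℝ := ‖a‖ with hr₀
  set R : ℝ := δ * τ a with hRdef
  have hτa : 0 < τ a := hτpos a
  have hR0 : 0 < R := mul_pos hδ hτa
  have hr₀0 : 0 ≤ r₀ := norm_nonneg a
  have hτuble : τ a ≤ τ₀ + c₁ * r₀ := by
    have := hlip 0 a
    rw [abs_le] at this
    have h2 := this.1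
    rw [zero_sub, norm_neg] at h2  -- abs (0 - a) = abs a ?
    linarith [h2]
  have hRle : R ≤ τ₀/4 + r₀/4 := by
    calc R = δ * τ a := rfl
      _ ≤ δ * (τ₀ + c₁ * r₀) := mul_le_mul_of_nonneg_left hτuble hδ.le
      _ = δ * τ₀ + (δ * c₁) * r₀ := by ring
      _ ≤ (1/4) * τ₀ + (1/4) * r₀ := by
          apply add_le_add
          · exact mul_le_mul_of_nonneg_right hδ1 hτ₀pos.le
          · exact mul_le_mul_of_nonneg_right hδc₁ hr₀0
      _ = τ₀/4 + r₀/4 := by ring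
  by_cases hcase : r₀ < 2 + 2*τ₀
  · -- small case: constant g
    refine ⟨fun _ => (φ r₀ : ℂ), Set.univ, isOpen_univ, Set.subset_univ _,
      differentiableOn_const _, Complex.ofReal_re _, ?_⟩
    intro z hz
    have hzabs : ‖z‖ ≤ 3 + 3*τ₀ := by
      have h1 : ‖z‖ ≤ r₀ + R := by
        calc ‖z‖ = ‖a + (z - a)‖ := by ring_nf
          _ ≤ ‖a‖ + ‖z - a‖ := norm_add_le _ _
          _ ≤ r₀ + R := by
              have := mem_closedBall.mp hz
              rw [dist_eq_norm] at this
              linarith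
      have h2 : R ≤ 1 + τ₀ := by
        calc R ≤ τ₀/4 + r₀/4 := hRle
          _ ≤ τ₀/4 + (2 + 2*τ₀)/4 := by linarith
          _ ≤ 1 + τ₀ := by linarith
      linarith
    have h3 := hB (‖z‖) ⟨norm_nonneg z, hzabs⟩
    have h4 := hB r₀ ⟨hr₀0, by linarith⟩
    rw [Real.norm_eq_abs] at h3 h4
    rw [Complex.ofReal_re]
    have := abs_sub (φ (‖z‖)) (φ r₀)
    calc |φ (‖z‖) - φ r₀| ≤ |φ (‖z‖)| + |φ r₀| := abs_sub _ _
      _ ≤ B + B := add_le_add h3 h4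
      _ ≤ max c₂ (2*B) := by
          have := le_max_right c₂ (2*B)
          linarith
  · -- large case: logarithmic g
    push_neg at hcase
    have hr₀pos : 0 < r₀ := by linarith
    have ha0 : a ≠ 0 := by
      intro h
      rw [h] at hr₀
      simp at hr₀
      linarith [hr₀pos, hr₀]
    have hτ₀r₀ : τ₀ ≤ r₀/2 - 1 := by linarith
    have hRr₀ : R ≤ 3*r₀/8 := by
      calc R ≤ τ₀/4 + r₀/4 := hRle
        _ ≤ (r₀/2 - 1)/4 + r₀/4 := by linarith
        _ ≤ 3*r₀/8 := by linarith
    have hr₀R1 : 1 ≤ r₀ - R := by linarith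
    -- Laplacian bound on the interval
    set Λ : ℝ := 2 * c₂ / τ a ^ 2 with hΛdef
    have hΛ0 : 0 ≤ Λ := by positivity
    have hlapbd : ∀ u ∈ Set.Icc (r₀ - R) (r₀ + R), 0 ≤ lapR φ u ∧ lapR φ u ≤ Λ := by
      intro u hu
      have hu0 : 0 < u := by linarith [hu.1]
      have hu1 : 1 ≤ u := by linarith [hu.1]
      refine ⟨hsub u hu0, ?_⟩
      set zu : ℂ := ((u / r₀ : ℝ) : ℂ) * a with hzu
      have hzuabs : ‖zu‖ = u := by
        rw [hzu, norm_mul, Complex.norm_real, Real.norm_eq_abs, abs_of_pos (div_pos hu0 hr₀pos)]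
        field_simp
        exact hr₀.symm
      have hzua : ‖zu - a‖ = |u - r₀| := by
        have h1 : zu - a = ((u / r₀ - 1 : ℝ) : ℂ) * a := by rw [hzu]; push_cast; ring
        rw [h1, norm_mul, Complex.norm_real, Real.norm_eq_abs, ← hr₀]
        have h2 : u / r₀ - 1 = (u - r₀) / r₀ := by field_simp
        rw [h2, abs_div, abs_of_pos hr₀pos]
        field_simp
      have hzuaR : ‖zu - a‖ ≤ R := by
        rw [hzua, abs_le]
        exact ⟨by linarith [hu.1], by linarith [hu.2]⟩
      have hτzu : 3/4 * τ a ≤ τ zu := by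
        have hl := hlip zu a
        rw [abs_le] at hl
        have h5 : c₁ * ‖zu - a‖ ≤ c₁ * R := mul_le_mul_of_nonneg_left hzuaR hc₁.le
        have h6 : c₁ * R = δ * c₁ * τ a := by rw [hRdef]; ring
        have h7 : δ * c₁ * τ a ≤ 1/4 * τ a := mul_le_mul_of_nonneg_right hδc₁ hτa.le
        linarith [hl.1]
      have hbdz := hbd zu (by rw [hzuabs]; exact hu1)
      rw [hzuabs] at hbdz
      have h6 : (3/4 * τ a)^2 ≤ τ zu^2 := by nlinarith [hτa]
      have h7 : (9/16) * (τ a^2) * lapR φ u ≤ c₂ := by nlinarith [hsub u hu0, hbdz, h6]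
      rw [hΛdef, le_div_iff₀ (by positivity : (0:ℝ) < τ a ^ 2)]
      nlinarith [h7, hc₂]
    -- the error bound constant
    have hEst := radial_est φ hφ r₀ R Λ hR0 hr₀R1 hΛ0 hlapbd
    have hEbd : R^2 * (r₀ + R) * Λ / (r₀ - R) ≤ c₂ := by
      have h1 : R^2 * Λ = 2*c₂*δ^2 := by
        rw [hΛdef, hRdef]
        field_simp
      have h2 : r₀ + R ≤ 3*(r₀ - R) := by linarith
      rw [div_le_iff₀ (by linarith : (0:ℝ) < r₀ - R)]
      have hδsq : δ^2 ≤ 1/16 := by nlinarith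
      calc R^2*(r₀+R)*Λ = (R^2*Λ)*(r₀+R) := by ring
        _ = 2*c₂*δ^2*(r₀+R) := by rw [h1]
        _ ≤ 2*c₂*(1/16)*(3*(r₀-R)) := by
            apply mul_le_mul _ h2 (by linarith) (by positivity)
            nlinarith [hc₂]
        _ ≤ c₂ * (r₀ - R) := by nlinarith [hc₂, hr₀R1]
    set c : ℝ := r₀ * deriv φ r₀ with hc
    refine ⟨fun z => (φ r₀ : ℂ) + (c : ℂ) * Complex.log (z / a), ball a (r₀/2), isOpen_ball,
      closedBall_subset_ball (by linarith), ?_, ?_, ?_⟩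
    · -- differentiability
      intro z hz
      have hzaabs : ‖z - a‖ < r₀ / 2 := by
        rw [mem_ball, Complex.dist_eq] at hz
        exact hz
      have hslit : z / a ∈ Complex.slitPlane := by
        have hza : z / a = 1 + (z - a) / a := by field_simp; ring
        have habs : ‖(z - a)/a‖ < 1/2 := by
          rw [norm_div, ← hr₀, div_lt_iff₀ hr₀pos]
          linarith
        have hre : 0 < (z/a).re := by
          rw [hza, Complex.add_re, Complex.one_re]
          have h8 := Complex.abs_re_le_norm ((z-a)/a)
          have h9 := neg_abs_le ((z-a)/a).re
          linarith
        exact Or.inl hre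
      apply DifferentiableAt.differentiableWithinAt
      apply DifferentiableAt.const_add
      apply DifferentiableAt.const_mul
      exact (Complex.differentiableAt_log hslit).comp z (differentiableAt_id.div_const a)
    · -- value at a
      show ((φ r₀ : ℂ) + (c:ℂ) * Complex.log (a / a)).re = φ r₀
      rw [div_self ha0, Complex.log_one, mul_zero, add_zero, Complex.ofReal_re]
    · -- the bound
      intro z hz
      have hzR : ‖z - a‖ ≤ R := by
        rw [mem_closedBall, Complex.dist_eq] at hz
        exact hz
      have hx : ‖z‖ ∈ Set.Icc (r₀ - R) (r₀ + R) := by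
        have h1 : |‖z‖ - ‖a‖| ≤ ‖z - a‖ :=
          abs_norm_sub_norm_le z a
        rw [abs_le, ← hr₀] at h1
        exact ⟨by linarith [h1.1], by linarith [h1.2]⟩
      have hz0 : 0 < ‖z‖ := by linarith [hx.1]
      have hgre : ((fun z => (φ r₀ : ℂ) + (c:ℂ) * Complex.log (z / a)) z).re
          = φ r₀ + c * (Real.log (‖z‖) - Real.log r₀) := by
        show ((φ r₀ : ℂ) + (c:ℂ) * Complex.log (z / a)).re = _
        rw [Complex.add_re, Complex.ofReal_re]
        have h3 : ((c:ℂ) * Complex.log (z/a)).re = c * (Complex.log (z/a)).re := by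
          rw [Complex.mul_re, Complex.ofReal_re, Complex.ofReal_im]
          ring
        rw [h3, Complex.log_re, norm_div, ← hr₀,
          Real.log_div (ne_of_gt hz0) (ne_of_gt hr₀pos)]
      rw [hgre]
      have h4 := hEst (‖z‖) hx
      calc |φ (‖z‖) - (φ r₀ + c * (Real.log (‖z‖) - Real.log r₀))|
          = |φ (‖z‖) - φ r₀ - c * (Real.log (‖z‖) - Real.log r₀)| := by
            congr 1
            ring
        _ ≤ R^2*(r₀+R)*Λ/(r₀-R) := h4
        _ ≤ c₂ := hEbd
        _ ≤ max c₂ (2*B) := le_max_left _ _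

end AuxLemmas

section AuxLemmas2
open scoped Real

/-- Lemma 2.3: if the radial `C²` function `φ` is subharmonic (`Δφ ≥ 0`), `τ : ℂ → (0,∞)`
is `c₁`-Lipschitz and `τ(z)² Δφ(z) ≤ c₂` for `|z| ≥ 1`, then for every `β ∈ ℝ` and
`0 < p < ∞` there is `M ≥ 1` such that for all `0 < δ ≤ m_τ`, `a ∈ ℂ` and entire `f`:
`|f(a)|^p e^{-βφ(a)} ≤ (M/(δ²τ(a)²)) ∫_{D(a,δτ(a))} |f|^p e^{-βφ} dm`. -/
theorem stmt12 (φ : ℝ → ℝ) (hφ : ContDiff ℝ 2 φ) (hsub : ∀ r : ℝ, 0 < r → 0 ≤ lapR φ r)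
    (τ : ℂ → ℝ) (c₁ c₂ : ℝ) (hc₁ : 0 < c₁) (hc₂ : 0 < c₂) (hτpos : ∀ z, 0 < τ z)
    (hlip : ∀ z ζ : ℂ, |τ z - τ ζ| ≤ c₁ * ‖z - ζ‖)
    (hbd : ∀ z : ℂ, 1 ≤ ‖z‖ → τ z ^ 2 * lapR φ (‖z‖) ≤ c₂)
    (β p : ℝ) (hp : 0 < p) :
    ∃ M : ℝ, 1 ≤ M ∧ ∀ δ : ℝ, 0 < δ → δ ≤ min 1 c₁⁻¹ / 4 → ∀ a : ℂ, ∀ f : ℂ → ℂ,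
      Differentiable ℂ f →
      ‖f a‖ ^ p * Real.exp (-(β * φ (‖a‖))) ≤
        M / (δ ^ 2 * τ a ^ 2) *
          ∫ z in ball a (δ * τ a),
            ‖f z‖ ^ p * Real.exp (-(β * φ (‖z‖))) := by
  obtain ⟨C, hC1, hC⟩ := submean hp
  obtain ⟨C₀, hC₀0, hC₀⟩ := weight_approx φ hφ hsub τ c₁ c₂ hc₁ hc₂ hτpos hlip hbd
  set E : ℝ := Real.exp (|β| * C₀) with hE
  have hE1 : 1 ≤ E := Real.one_le_exp (by positivity)
  refine ⟨C * E, le_trans hC1 (le_mul_of_one_le_right (by linarith) hE1), ?_⟩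
  intro δ hδ hδle a f hf
  obtain ⟨g, s, hsopen, hssub, hgdiff, hga, hgbd⟩ := hC₀ δ hδ hδle a
  set R : ℝ := δ * τ a with hRdef
  have hτa : 0 < τ a := hτpos a
  have hR0 : 0 < R := mul_pos hδ hτa
  set q : ℂ := ((β / p : ℝ) : ℂ) with hq
  set F : ℂ → ℂ := fun z => f z * Complex.exp (-(q * g z)) with hF
  have hFdiff : DifferentiableOn ℂ F s :=
    (hf.differentiableOn).mul (((hgdiff.const_mul q).neg).cexp)
  -- pointwise identity for |F|^p
  have hkey : ∀ z : ℂ, ‖F z‖ ^ p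
      = ‖f z‖ ^ p * Real.exp (-(β * (g z).re)) := by
    intro z
    have h1 : ‖F z‖ = ‖f z‖ * Real.exp (-((β/p) * (g z).re)) := by
      rw [hF]
      show ‖f z * Complex.exp (-(q * g z))‖ = _
      rw [norm_mul, Complex.norm_exp]
      congr 2
      rw [hq, Complex.neg_re, Complex.mul_re, Complex.ofReal_re, Complex.ofReal_im]
      ring
    rw [h1, Real.mul_rpow (norm_nonneg _) (Real.exp_pos _).le,
      ← Real.exp_mul]
    congr 2
    field_simp
  -- LHS equals |F a|^p
  have hLHS : ‖f a‖ ^ p * Real.exp (-(β * φ (‖a‖)))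
      = ‖F a‖ ^ p := by
    rw [hkey a, hga]
  -- submean inequality
  have hsm := hC a R hR0 F s hsopen hssub hFdiff
  -- integrand comparison on the ball
  have hcomp : ∀ z ∈ ball a R, ‖F z‖ ^ p
      ≤ E * (‖f z‖ ^ p * Real.exp (-(β * φ (‖z‖)))) := by
    intro z hz
    have hzc : z ∈ closedBall a R := ball_subset_closedBall hz
    have hb := hgbd z hzc
    have h2 : -(β * (g z).re) ≤ |β| * C₀ + -(β * φ (‖z‖)) := by
      have h3 : β * (φ (‖z‖) - (g z).re) ≤ |β| * C₀ := by
        calc β * (φ (‖z‖) - (g z).re) ≤ |β * (φ (‖z‖) - (g z).re)| :=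
              le_abs_self _
          _ = |β| * |φ (‖z‖) - (g z).re| := abs_mul _ _
          _ ≤ |β| * C₀ := mul_le_mul_of_nonneg_left hb (abs_nonneg β)
      linarith
    rw [hkey z]
    calc ‖f z‖ ^ p * Real.exp (-(β * (g z).re))
        ≤ ‖f z‖ ^ p * Real.exp (|β| * C₀ + -(β * φ (‖z‖))) :=
          mul_le_mul_of_nonneg_left (Real.exp_le_exp.mpr h2)
            (Real.rpow_nonneg (norm_nonneg _) _)
      _ = E * (‖f z‖ ^ p * Real.exp (-(β * φ (‖z‖)))) := by
          rw [Real.exp_add, hE]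
          ring
  -- integrability
  have hFcontAt : ∀ z ∈ closedBall a R, ContinuousAt F z := fun z hz =>
    ((hFdiff.differentiableAt (hsopen.mem_nhds (hssub hz)))).continuousAt
  have hFp_int : IntegrableOn (fun z => ‖F z‖ ^ p) (ball a R) := by
    have hFabs : ContinuousOn (fun z => ‖F z‖) (closedBall a R) := by
      intro z hz
      exact (continuous_norm.continuousAt.comp (hFcontAt z hz)).continuousWithinAt
    have hcont : ContinuousOn (fun z => ‖F z‖ ^ p) (closedBall a R) :=
      hFabs.rpow_const (fun z _ => Or.inr hp.le)
    exact (hcont.integrableOn_compact (isCompact_closedBall a R)).mono_set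
      ball_subset_closedBall
  have hfw_cont : Continuous (fun z => ‖f z‖ ^ p
      * Real.exp (-(β * φ (‖z‖)))) := by
    apply Continuous.mul
    · exact (continuous_norm.comp hf.continuous).rpow_const (fun x => Or.inr hp.le)
    · exact Real.continuous_exp.comp
        ((continuous_const.mul (hφ.continuous.comp continuous_norm)).neg)
  have hfw_int : IntegrableOn (fun z => ‖f z‖ ^ p
      * Real.exp (-(β * φ (‖z‖)))) (ball a R) :=
    ((hfw_cont.continuousOn).integrableOn_compact (isCompact_closedBall a R)).mono_set
      ball_subset_closedBall
  -- compare integrals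
  have hintle : ∫ z in ball a R, ‖F z‖ ^ p
      ≤ E * ∫ z in ball a R, ‖f z‖ ^ p * Real.exp (-(β * φ (‖z‖))) := by
    rw [← integral_const_mul]
    exact setIntegral_mono_on hFp_int (hfw_int.const_mul E) measurableSet_ball hcomp
  have hCR : 0 ≤ C / R ^ 2 := by positivity
  rw [hLHS]
  calc ‖F a‖ ^ p ≤ C / R ^ 2 * ∫ z in ball a R, ‖F z‖ ^ p := hsm
    _ ≤ C / R ^ 2 * (E * ∫ z in ball a R,
          ‖f z‖ ^ p * Real.exp (-(β * φ (‖z‖)))) :=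
        mul_le_mul_of_nonneg_left hintle hCR
    _ = C * E / (δ ^ 2 * τ a ^ 2) * ∫ z in ball a R,
          ‖f z‖ ^ p * Real.exp (-(β * φ (‖z‖))) := by
        rw [hRdef, mul_pow]
        ring

end AuxLemmas2
end
end

section
/- Assume φ : [0,∞) → ℝ⁺ is twice continuously differentiable such that Δφ > 0 and (Δφ(z))^{−1/2} ≍ τ(z), where τ is a radial positive differentiable function on ℂ decreasing to 0 as |z| → ∞ with τ'(r) → 0 as r → ∞, and let δ > 0 be sufficiently small. Then there exists r₀ > 0 such that φ'(|a|) ≍ φ'(|z|) for all z ∈ D(a, δτ(a)) and all a ∈ ℂ with |a| > r₀, with comparison constants independent of a and z. Moreover 1 + φ'(|a|) ≍ 1 + φ'(|z|) for all z ∈ D(a, δτ(a)) and all a ∈ ℂ. -/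
open MeasureTheory Filter Metric
open scoped ENNReal

noncomputable section

set_option maxHeartbeats 1000000 in
/-- Lemma 3.10: under the hypotheses on `φ` and `τ`, for each sufficiently small `δ > 0` there
is `r₀ > 0` such that `φ'(|a|) ≍ φ'(|z|)` for `z ∈ D(a, δτ(a))` and `|a| > r₀`, and moreover
`1 + φ'(|a|) ≍ 1 + φ'(|z|)` for `z ∈ D(a, δτ(a))` and all `a ∈ ℂ`. -/
theorem stmt17 (φ τ : ℝ → ℝ)
    (hφpos : ∀ r, 0 ≤ r → 0 < φ r) (hφ : ContDiff ℝ 2 φ)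
    (hlap : ∀ r : ℝ, 0 < r → 0 < lapR φ r)
    (hτpos : ∀ r : ℝ, 0 ≤ r → 0 < τ r) (hτdiff : Differentiable ℝ τ)
    (hτanti : ∀ r s : ℝ, 0 ≤ r → r ≤ s → τ s ≤ τ r)
    (hτlim : Tendsto τ atTop (nhds 0))
    (hτ'lim : Tendsto (deriv τ) atTop (nhds 0))
    (hcomp : ∃ c : ℝ, 0 < c ∧ ∀ r : ℝ, 0 < r →
      c⁻¹ ≤ τ r ^ 2 * lapR φ r ∧ τ r ^ 2 * lapR φ r ≤ c) :
    ∃ δ₀ : ℝ, 0 < δ₀ ∧ ∀ δ : ℝ, 0 < δ → δ ≤ δ₀ →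
      (∃ r₀ : ℝ, 0 < r₀ ∧ ∃ c : ℝ, 0 < c ∧ ∀ a z : ℂ, r₀ < ‖a‖ →
        z ∈ ball a (δ * τ (‖a‖)) →
          c⁻¹ * deriv φ (‖a‖) ≤ deriv φ (‖z‖) ∧
            deriv φ (‖z‖) ≤ c * deriv φ (‖a‖)) ∧
      (∃ c : ℝ, 0 < c ∧ ∀ a z : ℂ, z ∈ ball a (δ * τ (‖a‖)) →
          c⁻¹ * (1 + deriv φ (‖a‖)) ≤ 1 + deriv φ (‖z‖) ∧
            1 + deriv φ (‖z‖) ≤ c * (1 + deriv φ (‖a‖))) := by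
  classical
  obtain ⟨c₀, hc₀, hc⟩ := hcomp
  have hc₀1 : 1 ≤ c₀ := by
    have h1 := hc 1 one_pos
    have h2 : c₀⁻¹ ≤ c₀ := h1.1.trans h1.2
    nlinarith [mul_inv_cancel₀ (ne_of_gt hc₀)]
  -- smoothness
  have h2' : ContDiff ℝ ((1:ℕ∞)+1) φ := by exact_mod_cast hφ
  have hd1 : ContDiff ℝ 1 (deriv φ) := by
    exact_mod_cast (contDiff_succ_iff_deriv.mp (by exact_mod_cast h2')).2.2
  have hφ'cont : Continuous (deriv φ) := hd1.continuous
  have hφ''cont : Continuous (deriv (deriv φ)) := hd1.continuous_deriv le_rfl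
  set h : ℝ → ℝ := fun s => deriv φ s + s * deriv (deriv φ) s with hh
  have hcont : Continuous h := hφ'cont.add (continuous_id.mul hφ''cont)
  have hderiv_g : ∀ s : ℝ, HasDerivAt (fun t => t * deriv φ t) (h s) s := by
    intro s
    have h1 : HasDerivAt (deriv φ) (deriv (deriv φ) s) s :=
      ((hd1.differentiable one_ne_zero) s).hasDerivAt
    simpa [hh, Pi.mul_def] using (hasDerivAt_id' s).mul h1
  set g : ℝ → ℝ := fun t => t * deriv φ t with hg
  have ftc : ∀ u v : ℝ, (∫ s in u..v, h s) = g v - g u := fun u v =>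
    intervalIntegral.integral_eq_sub_of_hasDerivAt (fun t _ => hderiv_g t)
      (hcont.intervalIntegrable u v)
  have h_eq : ∀ s : ℝ, s ≠ 0 → h s = s * lapR φ s := by
    intro s hs
    simp only [hh, lapR]
    field_simp
    ring
  have h_nonneg : ∀ s : ℝ, 0 < s → 0 ≤ h s := by
    intro s hs
    rw [h_eq s (ne_of_gt hs)]
    exact le_of_lt (mul_pos hs (hlap s hs))
  -- bounds on lapR
  have hlaplow : ∀ s : ℝ, 0 < s → c₀⁻¹ / τ s ^ 2 ≤ lapR φ s := by
    intro s hs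
    have h1 := (hc s hs).1
    have hτs : 0 < τ s := hτpos s hs.le
    rw [div_le_iff₀ (by positivity)]
    nlinarith
  have hlapup : ∀ s : ℝ, 0 < s → lapR φ s ≤ c₀ / τ s ^ 2 := by
    intro s hs
    have h1 := (hc s hs).2
    have hτs : 0 < τ s := hτpos s hs.le
    rw [le_div_iff₀ (by positivity)]
    nlinarith
  -- monotonicity and nonnegativity of g
  have g_mono : ∀ u v : ℝ, 0 < u → u ≤ v → g u ≤ g v := by
    intro u v hu huv
    rw [← sub_nonneg, ← ftc]
    exact intervalIntegral.integral_nonneg huv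
      (fun s hs => h_nonneg s (lt_of_lt_of_le hu hs.1))
  have g_nonneg : ∀ u : ℝ, 0 ≤ u → 0 ≤ g u := by
    intro u hu
    rcases eq_or_lt_of_le hu with rfl | hu
    · simp [hg]
    · have gcont : Continuous g := continuous_id.mul hφ'cont
      have tend : Tendsto g (nhdsWithin 0 (Set.Ioi 0)) (nhds 0) := by
        have := (gcont.tendsto 0).mono_left (nhdsWithin_le_nhds (s := Set.Ioi (0:ℝ)))
        simpa [hg] using this
      refine le_of_tendsto tend ?_
      filter_upwards [Ioc_mem_nhdsGT_of_mem (Set.left_mem_Ico.mpr hu)] with v hv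
      exact g_mono v u hv.1 hv.2
  have φ'_nonneg : ∀ t : ℝ, 0 ≤ t → 0 ≤ deriv φ t := by
    intro t ht
    rcases eq_or_lt_of_le ht with rfl | ht
    · have tend : Tendsto (deriv φ) (nhdsWithin 0 (Set.Ioi 0)) (nhds (deriv φ 0)) :=
        (hφ'cont.tendsto 0).mono_left nhdsWithin_le_nhds
      refine ge_of_tendsto tend ?_
      filter_upwards [self_mem_nhdsWithin] with v hv
      have hv' : (0:ℝ) < v := hv
      have hgv := g_nonneg v hv'.le
      exact (mul_nonneg_iff_of_pos_left hv').mp hgv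
    · exact (mul_nonneg_iff_of_pos_left ht).mp (g_nonneg t ht.le)
  -- thresholds
  obtain ⟨R₀, hR₀⟩ : ∃ R₀ : ℝ, ∀ r : ℝ, R₀ ≤ r → |deriv τ r| ≤ 1/2 := by
    obtain ⟨N, hN⟩ := Metric.tendsto_atTop.mp hτ'lim (1/2) (by norm_num)
    exact ⟨N, fun r hr => by simpa [Real.dist_eq] using (hN r hr).le⟩
  obtain ⟨Ra, hRa⟩ : ∃ Ra : ℝ, ∀ r : ℝ, Ra ≤ r → τ r ≤ 1 := by
    obtain ⟨N, hN⟩ := Metric.tendsto_atTop.mp hτlim 1 one_pos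
    refine ⟨N, fun r hr => ?_⟩
    have h1 := hN r hr
    rw [Real.dist_eq] at h1
    have h2 := abs_lt.mp (by simpa using h1)
    linarith [h2.2]
  have hτ0 : 0 < τ 0 := hτpos 0 le_rfl
  set R₂ : ℝ := |R₀| + |Ra| + τ 0 + 2 with hR₂def
  have habsR₀ := abs_nonneg R₀
  have habsRa := abs_nonneg Ra
  have hleR₀ := le_abs_self R₀
  have hleRa := le_abs_self Ra
  have hR₂2 : (2:ℝ) ≤ R₂ := by simp only [hR₂def]; linarith
  have hR₂Ra : Ra ≤ R₂ := by simp only [hR₂def]; linarith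
  have hR₂R₀ : R₀ + 2 ≤ R₂ := by simp only [hR₂def]; linarith
  -- τ Lipschitz on [R₀, ∞)
  have τ_lip : ∀ x y : ℝ, R₀ ≤ x → R₀ ≤ y → |τ y - τ x| ≤ (1/2) * |y - x| := by
    intro x y hx hy
    have := Convex.norm_image_sub_le_of_norm_deriv_le (f := τ) (s := Set.Ici R₀)
      (fun t _ => hτdiff t) (fun t ht => by
        simpa [Real.norm_eq_abs] using hR₀ t ht) (convex_Ici R₀) hx hy
    simpa [Real.norm_eq_abs] using this
  -- τ comparability in balls
  have hτcomp : ∀ r : ℝ, R₂ ≤ r → ∀ s : ℝ, |s - r| ≤ τ r →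
      τ r / 2 ≤ τ s ∧ τ s ≤ 2 * τ r := by
    intro r hr s hs
    have hrpos : (0:ℝ) < r := by linarith
    have hτr : 0 < τ r := hτpos r hrpos.le
    have hτr1 : τ r ≤ 1 := hRa r (le_trans hR₂Ra hr)
    have hxR₀ : R₀ ≤ r := by linarith
    have hsR₀ : R₀ ≤ s := by
      have h1 := (abs_le.mp hs).1
      linarith
    have hlip := τ_lip r s hxR₀ hsR₀
    have h1 := (abs_le.mp hlip).1
    have h2 := (abs_le.mp hlip).2
    have h3 := (abs_le.mp hs).1
    have h4 := (abs_le.mp hs).2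
    have h5 := abs_nonneg (s - r)
    have h6 : |s - r| ≤ τ r := hs
    constructor <;> nlinarith
  -- lower bound for g
  have low : ∀ r : ℝ, R₂ ≤ r → c₀⁻¹ * (r / (8 * τ r)) ≤ g r := by
    intro r hr
    have hrpos : (0:ℝ) < r := by linarith
    have hτr : 0 < τ r := hτpos r hrpos.le
    have hτr1 : τ r ≤ 1 := hRa r (le_trans hR₂Ra hr)
    have hr2 : (2:ℝ) ≤ r := le_trans hR₂2 hr
    have hu : 0 < r - τ r := by linarith
    set u : ℝ := r - τ r with hu'
    have hgu : 0 ≤ g u := g_nonneg u hu.le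
    have key := ftc u r
    have hbound : ∀ s ∈ Set.Icc u r, (r/2) * (c₀⁻¹ / (2 * τ r)^2) ≤ h s := by
      intro s hsIcc
      have hspos : 0 < s := lt_of_lt_of_le hu hsIcc.1
      have habs : |s - r| ≤ τ r := by
        rw [abs_le]
        constructor
        · linarith [hsIcc.1]
        · linarith [hsIcc.2]
      have hτs2 := (hτcomp r hr s habs).2
      have hτspos : 0 < τ s := hτpos s hspos.le
      rw [h_eq s (ne_of_gt hspos)]
      have hl := hlaplow s hspos
      have hdiv : c₀⁻¹ / (2 * τ r)^2 ≤ c₀⁻¹ / τ s ^2 := by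
        apply div_le_div_of_nonneg_left (by positivity) (by positivity)
        nlinarith
      have hs2 : r/2 ≤ s := by
        have := hsIcc.1
        simp only [hu'] at this
        linarith
      calc (r/2) * (c₀⁻¹ / (2 * τ r)^2) ≤ s * (c₀⁻¹ / τ s ^2) := by
            apply mul_le_mul hs2 hdiv (by positivity) hspos.le
        _ ≤ s * lapR φ s := by
            exact mul_le_mul_of_nonneg_left hl hspos.le
    have hint : (∫ s in u..r, (r/2) * (c₀⁻¹ / (2 * τ r)^2)) ≤ ∫ s in u..r, h s :=
      intervalIntegral.integral_mono_on (by linarith) (intervalIntegrable_const)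
        (hcont.intervalIntegrable u r) hbound
    rw [intervalIntegral.integral_const, smul_eq_mul] at hint
    have heq2 : (r - u) * ((r/2) * (c₀⁻¹ / (2 * τ r)^2)) = c₀⁻¹ * (r / (8 * τ r)) := by
      simp only [hu']
      field_simp
      ring
    linarith [key ▸ hint, heq2 ▸ hint]
  -- increment bound
  have inc : ∀ r : ℝ, R₂ ≤ r → ∀ r' : ℝ, |r' - r| ≤ τ r →
      |g r' - g r| ≤ 8 * c₀ * (r / τ r) := by
    intro r hr r' hr'
    have hrpos : (0:ℝ) < r := by linarith
    have hτr : 0 < τ r := hτpos r hrpos.le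
    have hτr1 : τ r ≤ 1 := hRa r (le_trans hR₂Ra hr)
    have hr2 : (2:ℝ) ≤ r := le_trans hR₂2 hr
    have h3 := (abs_le.mp hr').1
    have h4 := (abs_le.mp hr').2
    rw [← ftc r r']
    have hC : ∀ x ∈ Set.uIoc r r', ‖h x‖ ≤ (2*r) * (c₀ / (τ r / 2)^2) := by
      intro x hx
      have hx1 : min r r' < x := hx.1
      have hx2 : x ≤ max r r' := hx.2
      have hxlow : r - τ r < x := by
        rcases le_total r r' with hcase | hcase
        · have : min r r' = r := min_eq_left hcase
          rw [this] at hx1; linarith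
        · have : min r r' = r' := min_eq_right hcase
          rw [this] at hx1; linarith
      have hxup : x ≤ r + τ r := by
        rcases le_total r r' with hcase | hcase
        · have : max r r' = r' := max_eq_right hcase
          rw [this] at hx2; linarith
        · have : max r r' = r := max_eq_left hcase
          rw [this] at hx2; linarith
      have hxpos : 0 < x := by linarith
      have habsx : |x - r| ≤ τ r := by rw [abs_le]; constructor <;> linarith
      have hτx := (hτcomp r hr x habsx).1
      have hτxpos : 0 < τ x := hτpos x hxpos.le
      have h08 : 0 ≤ h x := h_nonneg x hxpos
      rw [Real.norm_eq_abs, abs_of_nonneg h08, h_eq x (ne_of_gt hxpos)]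
      have hup := hlapup x hxpos
      have hdiv : c₀ / τ x ^2 ≤ c₀ / (τ r / 2)^2 := by
        apply div_le_div_of_nonneg_left (by positivity) (by positivity)
        nlinarith
      calc x * lapR φ x ≤ x * (c₀ / τ x ^2) := mul_le_mul_of_nonneg_left hup hxpos.le
        _ ≤ (2*r) * (c₀ / (τ r / 2)^2) := by
            apply mul_le_mul (by linarith) hdiv (by positivity) (by positivity)
    have hnorm := intervalIntegral.norm_integral_le_of_norm_le_const hC
    rw [Real.norm_eq_abs] at hnorm
    have hC0 : 0 ≤ (2*r) * (c₀ / (τ r / 2)^2) := by positivity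
    have h5 : (2*r) * (c₀ / (τ r / 2)^2) * |r' - r| ≤ (2*r) * (c₀ / (τ r / 2)^2) * τ r :=
      mul_le_mul_of_nonneg_left hr' hC0
    have heq : (2*r) * (c₀ / (τ r / 2)^2) * τ r = 8 * c₀ * (r / τ r) := by
      field_simp
      ring
    linarith
  -- main comparison for large radii
  have key1 : ∀ r r' : ℝ, 2*R₂ < r → |r' - r| ≤ τ r →
      (2*(1+256*c₀^2))⁻¹ * deriv φ r ≤ deriv φ r' ∧
        deriv φ r' ≤ (2*(1+256*c₀^2)) * deriv φ r := by
    intro r r' hrbig habs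
    set K : ℝ := 1 + 256*c₀^2 with hK
    have hKpos : (0:ℝ) < K := by positivity
    have hK1 : (1:ℝ) ≤ K := by nlinarith
    have hrR₂ : R₂ ≤ r := by linarith
    have hrpos : (0:ℝ) < r := by linarith
    have hτr : 0 < τ r := hτpos r hrpos.le
    have hτr1 : τ r ≤ 1 := hRa r (le_trans hR₂Ra hrR₂)
    have hr2 : (2:ℝ) ≤ r := le_trans hR₂2 hrR₂
    have habs1 := (abs_le.mp habs).1
    have habs2 := (abs_le.mp habs).2
    have hr'low : r/2 ≤ r' := by linarith
    have hr'R₂ : R₂ ≤ r' := by linarith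
    have hr'pos : 0 < r' := by linarith
    have hr'up : r' ≤ 2*r := by linarith
    have hrup : r ≤ 2*r' := by linarith
    have hτr'c := hτcomp r hrR₂ r' habs
    have hτr'pos : 0 < τ r' := hτpos r' hr'pos.le
    have hgr := low r hrR₂
    have hgr' := low r' hr'R₂
    have hincr := inc r hrR₂ r' habs
    set L : ℝ := c₀⁻¹ * (r / (8 * τ r)) with hL
    have hLpos : 0 < L := by positivity
    have hIL : 8 * c₀ * (r / τ r) = 64 * c₀^2 * L := by
      simp only [hL]
      field_simp
      ring
    rw [hIL] at hincr
    have hi1 := (abs_le.mp hincr).1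
    have hi2 := (abs_le.mp hincr).2
    -- L/4 ≤ g r'
    have hL4 : L / 4 ≤ g r' := by
      have hstep : c₀⁻¹ * ((r/2) / (8 * (2 * τ r))) ≤ c₀⁻¹ * (r' / (8 * τ r')) := by
        apply mul_le_mul_of_nonneg_left _ (by positivity : (0:ℝ) ≤ c₀⁻¹)
        apply div_le_div₀ hr'pos.le hr'low (by positivity)
        nlinarith [hτr'c.2]
      have heqL : c₀⁻¹ * ((r/2) / (8 * (2 * τ r))) = L / 4 := by
        simp only [hL]
        field_simp
        ring
      linarith [hgr']
    set A : ℝ := deriv φ r with hA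
    set B : ℝ := deriv φ r' with hB
    have hgrA : g r = r * A := rfl
    have hgr'B : g r' = r' * B := rfl
    have hAnn : 0 ≤ A := φ'_nonneg r hrpos.le
    have hBnn : 0 ≤ B := φ'_nonneg r' hr'pos.le
    rw [hgrA] at hgr hi1 hi2
    rw [hgr'B] at hgr' hi1 hi2 hL4
    -- upper: r' * B ≤ K * (r * A)
    have hup : r' * B ≤ K * (r * A) := by nlinarith
    -- lower: r * A ≤ K * (r' * B)
    have hlo : r * A ≤ K * (r' * B) := by nlinarith
    constructor
    · rw [inv_mul_le_iff₀ (by positivity)]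
      have hstep : A * r ≤ (2*K*B) * r := by nlinarith
      have := le_of_mul_le_mul_right hstep hrpos
      linarith
    · have hstep : B * r' ≤ (2*K*A) * r' := by nlinarith
      exact le_of_mul_le_mul_right hstep hr'pos
  -- assemble
  refine ⟨1, one_pos, fun δ hδ hδ1 => ?_⟩
  have hball : ∀ a z : ℂ, z ∈ ball a (δ * τ (‖a‖)) →
      |‖z‖ - ‖a‖| ≤ τ (‖a‖) := by
    intro a z hz
    have h1 : |‖z‖ - ‖a‖| ≤ ‖z - a‖ :=
      abs_norm_sub_norm_le z a
    have h3 : dist z a < δ * τ (‖a‖) := mem_ball.mp hz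
    rw [Complex.dist_eq] at h3
    have hτa : 0 < τ (‖a‖) := hτpos _ (norm_nonneg a)
    nlinarith
  constructor
  · refine ⟨2*R₂, by linarith, 2*(1+256*c₀^2), by positivity, fun a z hra hz => ?_⟩
    exact key1 _ _ hra (hball a z hz)
  · -- second part
    have hne : (Set.Icc (0:ℝ) (2*R₂ + τ 0)).Nonempty := ⟨0, le_rfl, by linarith⟩
    obtain ⟨x₀, hx₀mem, hx₀⟩ := (isCompact_Icc (a := (0:ℝ)) (b := 2*R₂ + τ 0)).exists_isMaxOn
      hne hφ'cont.continuousOn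
    set M : ℝ := deriv φ x₀ with hM
    have hM0 : 0 ≤ M := φ'_nonneg x₀ hx₀mem.1
    refine ⟨max (2*(1+256*c₀^2)) (1+M), lt_of_lt_of_le (by positivity) (le_max_right _ _),
      fun a z hz => ?_⟩
    set c₂ : ℝ := max (2*(1+256*c₀^2)) (1+M) with hc₂
    have hc₂a : 2*(1+256*c₀^2) ≤ c₂ := le_max_left _ _
    have hc₂b : 1 + M ≤ c₂ := le_max_right _ _
    have hc₂pos : 0 < c₂ := lt_of_lt_of_le (by positivity) hc₂b
    set r : ℝ := ‖a‖ with hr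
    set r' : ℝ := ‖z‖ with hr'
    have hrnn : 0 ≤ r := norm_nonneg a
    have hr'nn : 0 ≤ r' := norm_nonneg z
    have habs : |r' - r| ≤ τ r := hball a z hz
    have hAnn : 0 ≤ deriv φ r := φ'_nonneg r hrnn
    have hBnn : 0 ≤ deriv φ r' := φ'_nonneg r' hr'nn
    have hK2pos : (0:ℝ) < 2*(1+256*c₀^2) := by positivity
    have hK21 : (1:ℝ) ≤ 2*(1+256*c₀^2) := by nlinarith
    by_cases hcase : 2*R₂ < r
    · obtain ⟨hl, hu⟩ := key1 r r' hcase habs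
      have hABle : deriv φ r ≤ 2*(1+256*c₀^2) * deriv φ r' := by
        rw [inv_mul_le_iff₀ hK2pos] at hl
        exact hl
      constructor
      · rw [inv_mul_le_iff₀ hc₂pos]
        have p1 : 2*(1+256*c₀^2) * (1 + deriv φ r') ≤ c₂ * (1 + deriv φ r') :=
          mul_le_mul_of_nonneg_right hc₂a (by linarith)
        have p2 : 2*(1+256*c₀^2) * (1 + deriv φ r')
            = 2*(1+256*c₀^2) + 2*(1+256*c₀^2) * deriv φ r' := by ring
        linarith
      · have p1 : 2*(1+256*c₀^2) * (1 + deriv φ r) ≤ c₂ * (1 + deriv φ r) :=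
          mul_le_mul_of_nonneg_right hc₂a (by linarith)
        have p2 : 2*(1+256*c₀^2) * (1 + deriv φ r)
            = 2*(1+256*c₀^2) + 2*(1+256*c₀^2) * deriv φ r := by ring
        linarith
    · push_neg at hcase
      have hτ0' : τ r ≤ τ 0 := hτanti 0 r le_rfl hrnn
      have habs2 := (abs_le.mp habs).2
      have hr'up : r' ≤ 2*R₂ + τ 0 := by linarith
      have hAM : deriv φ r ≤ M := hx₀ ⟨hrnn, by linarith⟩
      have hBM : deriv φ r' ≤ M := hx₀ ⟨hr'nn, hr'up⟩
      have hMc : 1 + M ≤ c₂ := hc₂b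
      constructor
      · rw [inv_mul_le_iff₀ hc₂pos]
        have p1 : c₂ ≤ c₂ * (1 + deriv φ r') :=
          le_mul_of_one_le_right hc₂pos.le (by linarith)
        linarith
      · have p1 : c₂ ≤ c₂ * (1 + deriv φ r) :=
          le_mul_of_one_le_right hc₂pos.le (by linarith)
        linarith
end
end
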